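/- Let Z and Z̄ be symmetric d×d matrices, let B̂ in R^{d×k} consist of the top-k eigenvectors of Z, let B̂_⊥ be an orthonormal complement of B̂, and let B in R^{d×k} consist of the top-k eigenvectors of Z̄. Suppose the eigengap σ_k(Z̄) − σ_{k+1}(Z̄) ≥ g > 0 and ||Z − Z̄|| ≤ g/2. Then ||B̂_⊥^T B|| ≤ ||Z − Z̄|| / (g − ||Z − Z̄||) ≤ (2/g)·||Z − Z̄||. -/

import Mathlib

open Matrix

/-- Spectral (ℓ2 operator) norm of a real matrix. -/
noncomputable def specNorm {m n : ℕ} (A : Matrix (Fin m) (Fin n) ℝ) : ℝ :=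
  ⨆ x : {x : Fin n → ℝ // ∑ i, x i ^ 2 = 1},
    Real.sqrt (∑ i, (A.mulVec (x : Fin n → ℝ) i) ^ 2)

lemma specNorm_nonneg {m n : ℕ} (A : Matrix (Fin m) (Fin n) ℝ) : 0 ≤ specNorm A :=
  Real.iSup_nonneg fun _ => Real.sqrt_nonneg _

lemma specNorm_le {m n : ℕ} (A : Matrix (Fin m) (Fin n) ℝ) {c : ℝ} (hc : 0 ≤ c)
    (h : ∀ x : Fin n → ℝ, ∑ i, x i ^ 2 = 1 → Real.sqrt (∑ i, (A.mulVec x i) ^ 2) ≤ c) :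
    specNorm A ≤ c :=
  Real.iSup_le (fun x => h x x.2) hc

lemma dot_cs (n : ℕ) (u v : Fin n → ℝ) :
    u ⬝ᵥ v ≤ Real.sqrt (∑ i, u i ^ 2) * Real.sqrt (∑ i, v i ^ 2) := by
  have h := Finset.sum_mul_sq_le_sq_mul_sq Finset.univ u v
  calc u ⬝ᵥ v ≤ |u ⬝ᵥ v| := le_abs_self _
    _ = Real.sqrt ((∑ i, u i * v i) ^ 2) := by
        rw [Real.sqrt_sq_eq_abs]; rfl
    _ ≤ Real.sqrt ((∑ i, u i ^ 2) * (∑ i, v i ^ 2)) := Real.sqrt_le_sqrt h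
    _ = _ := Real.sqrt_mul (by positivity) _


lemma specNorm_exists_max {m n : ℕ} (A : Matrix (Fin m) (Fin n) ℝ) (hn : 0 < n) :
    ∃ x : Fin n → ℝ, (∑ i, x i ^ 2 = 1) ∧
      specNorm A = Real.sqrt (∑ i, (A.mulVec x i) ^ 2) ∧
      (∀ y : Fin n → ℝ, ∑ i, y i ^ 2 = 1 →
        Real.sqrt (∑ i, (A.mulVec y i) ^ 2) ≤ Real.sqrt (∑ i, (A.mulVec x i) ^ 2)) := by
  set f : (Fin n → ℝ) → ℝ := fun x => Real.sqrt (∑ i, (A.mulVec x i) ^ 2) with hf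
  set Sph : Set (Fin n → ℝ) := {x | ∑ i, x i ^ 2 = 1} with hS
  have hne : Sph.Nonempty := by
    refine ⟨Pi.single ⟨0, hn⟩ 1, ?_⟩
    simp [hS, Pi.single_apply]
  have hclosed : IsClosed Sph := by
    have hc : Continuous fun x : Fin n → ℝ => ∑ i, x i ^ 2 := by
      exact continuous_finset_sum _ fun i _ => (continuous_apply i).pow 2
    exact isClosed_eq hc continuous_const
  have hsub : Sph ⊆ Metric.closedBall 0 1 := by
    intro x hx
    rw [Metric.mem_closedBall, dist_pi_le_iff (by norm_num)]
    intro i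
    have h1 : x i ^ 2 ≤ 1 := by
      rw [← hx]
      exact Finset.single_le_sum (fun j _ => sq_nonneg (x j)) (Finset.mem_univ i)
    simpa [Real.dist_eq] using (sq_le_one_iff_abs_le_one (x i)).mp h1
  have hcomp : IsCompact Sph :=
    (isCompact_closedBall (0 : Fin n → ℝ) 1).of_isClosed_subset hclosed hsub
  have hcont : Continuous f := by
    apply Real.continuous_sqrt.comp
    apply continuous_finset_sum
    intro i _
    have : Continuous fun x : Fin n → ℝ => A.mulVec x i := by
      simp only [Matrix.mulVec, dotProduct]
      exact continuous_finset_sum _ fun j _ => continuous_const.mul (continuous_apply j)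
    exact this.pow 2
  obtain ⟨x, hxS, hmax⟩ := hcomp.exists_isMaxOn hne hcont.continuousOn
  refine ⟨x, hxS, ?_, fun y hy => hmax hy⟩
  apply le_antisymm
  · exact Real.iSup_le (fun z => hmax z.2) (Real.sqrt_nonneg _)
  · have hb : BddAbove (Set.range fun z : {x : Fin n → ℝ // ∑ i, x i ^ 2 = 1} => f z.1) := by
      refine ⟨f x, ?_⟩
      rintro _ ⟨z, rfl⟩
      exact hmax z.2
    exact le_ciSup hb (⟨x, hxS⟩ : {x : Fin n → ℝ // ∑ i, x i ^ 2 = 1})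


/-- unit-vector bound -/
lemma unit_le_specNorm {m n : ℕ} (A : Matrix (Fin m) (Fin n) ℝ) (y : Fin n → ℝ)
    (hy : ∑ i, y i ^ 2 = 1) : Real.sqrt (∑ i, (A.mulVec y i) ^ 2) ≤ specNorm A := by
  have hn : 0 < n := by
    rcases Nat.eq_zero_or_pos n with h | h
    · exfalso; subst h; simpa using hy
    · exact h
  obtain ⟨x, hx, heq, hmax⟩ := specNorm_exists_max A hn
  rw [heq]; exact hmax y hy

/-- general scaling bound, squared form -/
lemma sq_mulVec_le {m n : ℕ} (A : Matrix (Fin m) (Fin n) ℝ) (y : Fin n → ℝ) :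
    ∑ i, (A.mulVec y i) ^ 2 ≤ specNorm A ^ 2 * ∑ i, y i ^ 2 := by
  rcases eq_or_lt_of_le (Finset.sum_nonneg fun i _ => sq_nonneg (y i)) with h0 | h0
  · have hy0 : y = 0 := by
      funext i
      have := (Finset.sum_eq_zero_iff_of_nonneg (fun j _ => sq_nonneg (y j))).mp h0.symm i
        (Finset.mem_univ i)
      exact pow_eq_zero_iff (n := 2) (by norm_num) |>.mp this
    simp [hy0, Matrix.mulVec_zero, ← h0]
  · set t := Real.sqrt (∑ i, y i ^ 2) with ht
    have htpos : 0 < t := Real.sqrt_pos.mpr h0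
    have ht2 : t ^ 2 = ∑ i, y i ^ 2 := Real.sq_sqrt h0.le
    set z : Fin n → ℝ := t⁻¹ • y with hz
    have hz1 : ∑ i, z i ^ 2 = 1 := by
      simp only [hz, Pi.smul_apply, smul_eq_mul, mul_pow, ← Finset.mul_sum, ← ht2]
      field_simp
    have hkey := unit_le_specNorm A z hz1
    have hAz : ∀ i, A.mulVec z i = t⁻¹ * A.mulVec y i := by
      intro i
      simp [hz, Matrix.mulVec_smul]
    have hsum : ∑ i, (A.mulVec z i) ^ 2 = t⁻¹ ^ 2 * ∑ i, (A.mulVec y i) ^ 2 := by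
      simp only [hAz, mul_pow, ← Finset.mul_sum]
    have h1 : Real.sqrt (∑ i, (A.mulVec z i) ^ 2) ^ 2 ≤ specNorm A ^ 2 := by
      apply pow_le_pow_left₀ (Real.sqrt_nonneg _) hkey
    rw [Real.sq_sqrt (by positivity), hsum] at h1
    calc ∑ i, (A.mulVec y i) ^ 2 = t ^ 2 * (t⁻¹ ^ 2 * ∑ i, (A.mulVec y i) ^ 2) := by
          field_simp
      _ ≤ t ^ 2 * specNorm A ^ 2 := by
          apply mul_le_mul_of_nonneg_left h1 (by positivity)
      _ = specNorm A ^ 2 * ∑ i, y i ^ 2 := by rw [ht2]; ring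


lemma orth_comp {d a b : ℕ} (P : Matrix (Fin d) (Fin a) ℝ) (Q : Matrix (Fin d) (Fin b) ℝ)
    (hP : Pᵀ * P = 1) (hQ : Qᵀ * Q = 1) (hc : P * Pᵀ + Q * Qᵀ = 1) : Qᵀ * P = 0 := by
  have h : Qᵀ * P * (Pᵀ * P) + Qᵀ * Q * (Qᵀ * P) = Qᵀ * P := by
    calc Qᵀ * P * (Pᵀ * P) + Qᵀ * Q * (Qᵀ * P) = Qᵀ * (P * Pᵀ + Q * Qᵀ) * P := by
          simp only [Matrix.mul_add, Matrix.add_mul, Matrix.mul_assoc]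
      _ = Qᵀ * P := by rw [hc, Matrix.mul_one]
  rw [hP, hQ, Matrix.mul_one, Matrix.one_mul] at h
  exact add_eq_left.mp h

lemma dot_sq {n : ℕ} (x : Fin n → ℝ) : ∑ i, x i ^ 2 = x ⬝ᵥ x := by
  simp [dotProduct, sq]

lemma dot_mulVec_eq {m n : ℕ} (M : Matrix (Fin m) (Fin n) ℝ) (u : Fin m → ℝ) (v : Fin n → ℝ) :
    u ⬝ᵥ (M.mulVec v) = (Mᵀ.mulVec u) ⬝ᵥ v := by
  rw [Matrix.mulVec_transpose, Matrix.dotProduct_mulVec]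

lemma sum_sq_mulVec_orth {d a : ℕ} (P : Matrix (Fin d) (Fin a) ℝ) (hP : Pᵀ * P = 1)
    (x : Fin a → ℝ) : ∑ i, (P.mulVec x i) ^ 2 = ∑ i, x i ^ 2 := by
  rw [dot_sq, dot_sq, dot_mulVec_eq, Matrix.mulVec_mulVec, hP, Matrix.one_mulVec]

lemma sum_sq_decomp {d a b : ℕ} (P : Matrix (Fin d) (Fin a) ℝ) (Q : Matrix (Fin d) (Fin b) ℝ)
    (hc : P * Pᵀ + Q * Qᵀ = 1) (y : Fin d → ℝ) :
    ∑ i, (Pᵀ.mulVec y i) ^ 2 + ∑ i, (Qᵀ.mulVec y i) ^ 2 = ∑ i, y i ^ 2 := by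
  rw [dot_sq (Pᵀ.mulVec y), dot_sq (Qᵀ.mulVec y), dot_sq y]
  rw [dot_mulVec_eq, Matrix.transpose_transpose, Matrix.mulVec_mulVec]
  rw [dot_mulVec_eq, Matrix.transpose_transpose, Matrix.mulVec_mulVec]
  rw [dotProduct_comm ((P * Pᵀ).mulVec y), dotProduct_comm ((Q * Qᵀ).mulVec y)]
  rw [← dotProduct_add, ← Matrix.add_mulVec, hc, Matrix.one_mulVec]


lemma psd_kernel {n : ℕ} (M : Matrix (Fin n) (Fin n) ℝ) (hsym : Mᵀ = M)
    (hpsd : ∀ z : Fin n → ℝ, 0 ≤ z ⬝ᵥ M.mulVec z) (x : Fin n → ℝ)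
    (hx : x ⬝ᵥ M.mulVec x = 0) : M.mulVec x = 0 := by
  have key : ∀ z : Fin n → ℝ, z ⬝ᵥ M.mulVec x = 0 := by
    intro z
    set c := z ⬝ᵥ M.mulVec x with hc
    set a := z ⬝ᵥ M.mulVec z with ha
    have hxz : x ⬝ᵥ M.mulVec z = c := by
      rw [dot_mulVec_eq, hsym, dotProduct_comm]
    have expand : ∀ t : ℝ, (x + t • z) ⬝ᵥ M.mulVec (x + t • z) = a * t ^ 2 + 2 * t * c := by
      intro t
      rw [Matrix.mulVec_add, Matrix.mulVec_smul]
      simp only [dotProduct_add, add_dotProduct, smul_dotProduct, dotProduct_smul,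
        smul_eq_mul, hx, hxz, ← hc, ← ha]
      ring
    have hq : ∀ t : ℝ, 0 ≤ a * t ^ 2 + 2 * t * c := by
      intro t; rw [← expand t]; exact hpsd _
    have ha0 : 0 ≤ a := hpsd z
    have hA : (0:ℝ) < a + 1 := by linarith
    have h1 := hq (-c / (a + 1))
    have h2 : 0 ≤ (a * (-c / (a + 1)) ^ 2 + 2 * (-c / (a + 1)) * c) * (a + 1) ^ 2 :=
      mul_nonneg h1 (sq_nonneg _)
    have h3 : (a * (-c / (a + 1)) ^ 2 + 2 * (-c / (a + 1)) * c) * (a + 1) ^ 2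
        = a * c ^ 2 - 2 * c ^ 2 * (a + 1) := by
      field_simp
      ring
    rw [h3] at h2
    nlinarith [sq_nonneg c, mul_nonneg ha0 (sq_nonneg c)]
  funext i
  have h := key (Pi.single i 1)
  simpa using h


lemma exists_singular {m n : ℕ} (S : Matrix (Fin m) (Fin n) ℝ) (hn : 0 < n)
    (hσ : 0 < specNorm S) :
    ∃ (x : Fin n → ℝ) (u : Fin m → ℝ), (∑ i, x i ^ 2 = 1) ∧ (∑ i, u i ^ 2 = 1) ∧
      S.mulVec x = specNorm S • u ∧ Sᵀ.mulVec u = specNorm S • x := by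
  obtain ⟨x, hx1, heq, -⟩ := specNorm_exists_max S hn
  set σ := specNorm S with hσdef
  have hSx : ∑ i, (S.mulVec x i) ^ 2 = σ ^ 2 := by
    rw [heq, Real.sq_sqrt (Finset.sum_nonneg fun i _ => sq_nonneg _)]
  set M : Matrix (Fin n) (Fin n) ℝ := σ ^ 2 • (1 : Matrix (Fin n) (Fin n) ℝ) - Sᵀ * S with hM
  have hMv : ∀ z, M.mulVec z = σ ^ 2 • z - Sᵀ.mulVec (S.mulVec z) := by
    intro z
    rw [hM, Matrix.sub_mulVec, Matrix.smul_mulVec, Matrix.one_mulVec,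
      Matrix.mulVec_mulVec]
  have hdot : ∀ z : Fin n → ℝ, z ⬝ᵥ M.mulVec z = σ ^ 2 * (∑ i, z i ^ 2) - ∑ i, (S.mulVec z i) ^ 2 := by
    intro z
    rw [hMv, dotProduct_sub, dotProduct_smul, smul_eq_mul, ← dot_sq,
      dot_mulVec_eq, Matrix.transpose_transpose, ← dot_sq]
  have hsym : Mᵀ = M := by
    rw [hM, Matrix.transpose_sub, Matrix.transpose_smul, Matrix.transpose_one,
      Matrix.transpose_mul, Matrix.transpose_transpose]
  have hpsd : ∀ z : Fin n → ℝ, 0 ≤ z ⬝ᵥ M.mulVec z := by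
    intro z
    rw [hdot]
    have := sq_mulVec_le S z
    linarith
  have hx0 : x ⬝ᵥ M.mulVec x = 0 := by
    rw [hdot, hx1, hSx]; ring
  have hker := psd_kernel M hsym hpsd x hx0
  rw [hMv] at hker
  have heig : Sᵀ.mulVec (S.mulVec x) = σ ^ 2 • x := by
    have := sub_eq_zero.mp hker
    exact this.symm
  refine ⟨x, σ⁻¹ • S.mulVec x, hx1, ?_, ?_, ?_⟩
  · simp only [Pi.smul_apply, smul_eq_mul, mul_pow, ← Finset.mul_sum, hSx]
    field_simp
  · funext i
    simp only [Pi.smul_apply, smul_eq_mul]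
    field_simp
  · rw [Matrix.mulVec_smul, heig]
    funext i
    simp only [Pi.smul_apply, smul_eq_mul]
    field_simp


lemma weyl_bound {d k : ℕ} (Zm Zb : Matrix (Fin d) (Fin d) ℝ)
    (Bhat B : Matrix (Fin d) (Fin k) ℝ)
    (Bhatp Bp : Matrix (Fin d) (Fin (d - k)) ℝ)
    (hBhat : Bhatᵀ * Bhat = 1) (hBhatp : Bhatpᵀ * Bhatp = 1)
    (hcomp1 : Bhat * Bhatᵀ + Bhatp * Bhatpᵀ = 1)
    (hcomp2 : B * Bᵀ + Bp * Bpᵀ = 1)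
    (D1 : Fin k → ℝ) (D2 : Fin (d - k) → ℝ)
    (hZm : Zm = Bhat * Matrix.diagonal D1 * Bhatᵀ + Bhatp * Matrix.diagonal D2 * Bhatpᵀ)
    (htop : ∀ i j, D2 j ≤ D1 i)
    (E1 : Fin k → ℝ) (E2 : Fin (d - k) → ℝ)
    (hZb : Zb = B * Matrix.diagonal E1 * Bᵀ + Bp * Matrix.diagonal E2 * Bpᵀ)
    (j : Fin (d - k)) (M2 : ℝ) (hM2 : ∀ j', E2 j' ≤ M2) :
    D2 j ≤ M2 + specNorm (Zm - Zb) := by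
  have horth1 : Bhatpᵀ * Bhat = 0 := orth_comp Bhat Bhatp hBhat hBhatp hcomp1
  have horth1' : Bhatᵀ * Bhatp = 0 := by
    have := congrArg Matrix.transpose horth1
    simpa using this
  -- the kernel vector
  set q : Fin (d - k) → ℝ := Pi.single j 1 with hq
  set K : Matrix (Fin k) (Fin (k + 1)) ℝ :=
    Matrix.of (fun r => Fin.snoc (fun c => (Bᵀ * Bhat) r c) ((Bᵀ * Bhatp) r j)) with hK
  set N : Matrix (Fin (k + 1)) (Fin (k + 1)) ℝ :=
    Matrix.of (Fin.snoc (fun r => K r) 0) with hN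
  have hdet : N.det = 0 := by
    apply Matrix.det_eq_zero_of_row_eq_zero (Fin.last k)
    intro c
    simp [hN]
  obtain ⟨v, hv0, hNv⟩ := Matrix.exists_mulVec_eq_zero_iff.mpr hdet
  set a : Fin k → ℝ := fun c => v c.castSucc with ha
  set t : ℝ := v (Fin.last k) with ht
  set w : Fin d → ℝ := Bhat.mulVec a + t • Bhatp.mulVec q with hw
  have hsumq : ∑ i, q i ^ 2 = 1 := by
    rw [hq]
    calc ∑ i, (Pi.single j 1 : Fin (d-k) → ℝ) i ^ 2
        = ∑ i, if i = j then (1:ℝ) else 0 := by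
          apply Finset.sum_congr rfl
          intro i _
          by_cases h : i = j <;> simp [Pi.single_apply, h]
      _ = 1 := by simp
  -- B^T w = 0
  have hBw : Bᵀ.mulVec w = 0 := by
    funext r
    have h1 : K r ⬝ᵥ v = 0 := by
      have h1' : (N.mulVec v) (Fin.castSucc r) = 0 := by rw [hNv]; rfl
      rw [Matrix.mulVec] at h1'
      have h2 : N (Fin.castSucc r) = K r := by
        rw [hN]
        show (Fin.snoc (fun r => K r) 0 : Fin (k+1) → Fin (k+1) → ℝ) (Fin.castSucc r) = K r
        rw [Fin.snoc_castSucc]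
      rwa [h2] at h1'
    have h2 : ∑ c : Fin k, (Bᵀ * Bhat) r c * a c + (Bᵀ * Bhatp) r j * t = 0 := by
      rw [dotProduct, Fin.sum_univ_castSucc] at h1
      have e1 : ∀ c : Fin k, K r (Fin.castSucc c) = (Bᵀ * Bhat) r c := by
        intro c
        show (Fin.snoc (fun c => (Bᵀ * Bhat) r c) ((Bᵀ * Bhatp) r j) : Fin (k+1) → ℝ)
          (Fin.castSucc c) = _
        rw [Fin.snoc_castSucc]
      have e2 : K r (Fin.last k) = (Bᵀ * Bhatp) r j := by
        show (Fin.snoc (fun c => (Bᵀ * Bhat) r c) ((Bᵀ * Bhatp) r j) : Fin (k+1) → ℝ)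
          (Fin.last k) = _
        rw [Fin.snoc_last]
      simp only [e1, e2] at h1
      exact h1
    show (Bᵀ.mulVec w) r = 0
    rw [hw, Matrix.mulVec_add, Matrix.mulVec_smul, Matrix.mulVec_mulVec, Matrix.mulVec_mulVec,
      hq, Matrix.mulVec_single]
    simp only [Pi.add_apply, Pi.smul_apply, smul_eq_mul, mul_one]
    simp only [Matrix.mulVec, dotProduct]
    simp only [MulOpposite.op_one, one_smul, Matrix.col_apply]
    rw [← h2]
    ring
  -- components of w
  have hBhatw : Bhatᵀ.mulVec w = a := by
    rw [hw, Matrix.mulVec_add, Matrix.mulVec_smul, Matrix.mulVec_mulVec, Matrix.mulVec_mulVec,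
      hBhat, horth1', Matrix.one_mulVec, Matrix.zero_mulVec, smul_zero, add_zero]
  have hBhatpw : Bhatpᵀ.mulVec w = t • q := by
    rw [hw, Matrix.mulVec_add, Matrix.mulVec_smul, Matrix.mulVec_mulVec, Matrix.mulVec_mulVec,
      hBhatp, horth1, Matrix.one_mulVec, Matrix.zero_mulVec, zero_add]
  have htq : ∑ i, (t • q) i ^ 2 = t ^ 2 := by
    calc ∑ i, (t • q) i ^ 2 = ∑ i, t ^ 2 * q i ^ 2 := by
          apply Finset.sum_congr rfl; intro i _; simp [mul_pow]
      _ = t ^ 2 * ∑ i, q i ^ 2 := by rw [Finset.mul_sum]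
      _ = t ^ 2 := by rw [hsumq, mul_one]
  have hW : ∑ i, w i ^ 2 = ∑ c, a c ^ 2 + t ^ 2 := by
    have h := sum_sq_decomp Bhat Bhatp hcomp1 w
    rw [hBhatw, hBhatpw, htq] at h
    exact h.symm
  have hWpos : 0 < ∑ i, w i ^ 2 := by
    have hv : 0 < ∑ i : Fin (k+1), v i ^ 2 := by
      obtain ⟨c, hc⟩ := Function.ne_iff.mp hv0
      exact Finset.sum_pos' (fun i _ => sq_nonneg _) ⟨c, Finset.mem_univ c, lt_of_le_of_ne (sq_nonneg _) (Ne.symm (pow_ne_zero 2 hc))⟩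
    rw [hW]
    rw [Fin.sum_univ_castSucc] at hv
    exact hv
  -- quadratic forms
  have hZmw : w ⬝ᵥ Zm.mulVec w = ∑ i, D1 i * a i ^ 2 + D2 j * t ^ 2 := by
    rw [hZm, Matrix.add_mulVec, dotProduct_add]
    rw [← Matrix.mulVec_mulVec, ← Matrix.mulVec_mulVec (M := Bhat), hBhatw]
    rw [← Matrix.mulVec_mulVec, ← Matrix.mulVec_mulVec (M := Bhatp), hBhatpw]
    rw [dot_mulVec_eq Bhat, hBhatw, dot_mulVec_eq Bhatp, hBhatpw]
    congr 1
    · simp only [dotProduct, Matrix.mulVec_diagonal]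
      apply Finset.sum_congr rfl; intro i _; ring
    · simp only [dotProduct, Matrix.mulVec_diagonal, Pi.smul_apply, smul_eq_mul]
      have : ∀ i, t * q i * (D2 i * (t * q i)) = D2 i * (t • q) i ^ 2 := by
        intro i; simp [Pi.smul_apply]; ring
      rw [Finset.sum_congr rfl fun i _ => this i]
      calc ∑ i, D2 i * (t • q) i ^ 2 = ∑ i, D2 j * (t • q) i ^ 2 := by
            apply Finset.sum_congr rfl
            intro i _
            rcases eq_or_ne i j with rfl | hij
            · rfl
            · simp [hq, Pi.single_apply, hij]
        _ = D2 j * t ^ 2 := by rw [← Finset.mul_sum, htq]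
  have hZbw : w ⬝ᵥ Zb.mulVec w ≤ M2 * ∑ i, w i ^ 2 := by
    rw [hZb, Matrix.add_mulVec, dotProduct_add]
    rw [← Matrix.mulVec_mulVec, ← Matrix.mulVec_mulVec (M := B)]
    rw [← Matrix.mulVec_mulVec, ← Matrix.mulVec_mulVec (M := Bp)]
    rw [dot_mulVec_eq B, hBw, dot_mulVec_eq Bp]
    simp only [zero_dotProduct, zero_add]
    have hsum : ∑ i, (Bpᵀ.mulVec w i) ^ 2 = ∑ i, w i ^ 2 := by
      have h := sum_sq_decomp B Bp hcomp2 w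
      rw [hBw] at h
      simpa using h
    calc (Bpᵀ.mulVec w) ⬝ᵥ (Matrix.diagonal E2).mulVec (Bpᵀ.mulVec w)
        = ∑ i, E2 i * (Bpᵀ.mulVec w i) ^ 2 := by
          simp only [dotProduct, Matrix.mulVec_diagonal]
          apply Finset.sum_congr rfl; intro i _; ring
      _ ≤ ∑ i, M2 * (Bpᵀ.mulVec w i) ^ 2 := by
          apply Finset.sum_le_sum
          intro i _
          exact mul_le_mul_of_nonneg_right (hM2 i) (sq_nonneg _)
      _ = M2 * ∑ i, w i ^ 2 := by rw [← Finset.mul_sum, hsum]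
  have hpertw : w ⬝ᵥ (Zm - Zb).mulVec w ≤ specNorm (Zm - Zb) * ∑ i, w i ^ 2 := by
    calc w ⬝ᵥ (Zm - Zb).mulVec w
        ≤ Real.sqrt (∑ i, w i ^ 2) * Real.sqrt (∑ i, ((Zm - Zb).mulVec w i) ^ 2) :=
          dot_cs d w _
      _ ≤ Real.sqrt (∑ i, w i ^ 2) * Real.sqrt (specNorm (Zm - Zb) ^ 2 * ∑ i, w i ^ 2) := by
          apply mul_le_mul_of_nonneg_left (Real.sqrt_le_sqrt (sq_mulVec_le _ w))
            (Real.sqrt_nonneg _)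
      _ = specNorm (Zm - Zb) * ∑ i, w i ^ 2 := by
          rw [Real.sqrt_mul (sq_nonneg _), Real.sqrt_sq (specNorm_nonneg _)]
          rw [← mul_assoc, mul_comm (Real.sqrt _) (specNorm _), mul_assoc,
            Real.mul_self_sqrt (Finset.sum_nonneg fun i _ => sq_nonneg _)]
  -- combine
  have hlow : D2 j * ∑ i, w i ^ 2 ≤ w ⬝ᵥ Zm.mulVec w := by
    rw [hZmw, hW, mul_add]
    have : D2 j * ∑ c, a c ^ 2 ≤ ∑ i, D1 i * a i ^ 2 := by
      rw [Finset.mul_sum]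
      apply Finset.sum_le_sum
      intro i _
      exact mul_le_mul_of_nonneg_right (htop i j) (sq_nonneg _)
    linarith
  have hsplit : w ⬝ᵥ Zm.mulVec w = w ⬝ᵥ Zb.mulVec w + w ⬝ᵥ (Zm - Zb).mulVec w := by
    rw [Matrix.sub_mulVec, dotProduct_sub]
    ring
  have hfinal : D2 j * ∑ i, w i ^ 2 ≤ (M2 + specNorm (Zm - Zb)) * ∑ i, w i ^ 2 := by
    rw [add_mul]
    rw [hsplit] at hlow
    linarith
  exact le_of_mul_le_mul_right hfinal hWpos



/-- Davis–Kahan sin-θ theorem.  `Bhat` holds the top-`k` eigenvectors of the symmetric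
matrix `Zm` (witnessed by the spectral decomposition with eigenvalues `D1 ≥ D2`),
`Bhatp` an orthonormal complement of `Bhat`, and `B` holds the top-`k` eigenvectors of
the symmetric matrix `Zb` (eigenvalues `E1`, `E2`) with eigengap `g`. -/
theorem stmt16 (d k : ℕ) (Zm Zb : Matrix (Fin d) (Fin d) ℝ)
    (Bhat B : Matrix (Fin d) (Fin k) ℝ)
    (Bhatp Bp : Matrix (Fin d) (Fin (d - k)) ℝ)
    (hBhat : Bhatᵀ * Bhat = 1) (hBhatp : Bhatpᵀ * Bhatp = 1)
    (hcomp1 : Bhat * Bhatᵀ + Bhatp * Bhatpᵀ = 1)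
    (hB : Bᵀ * B = 1) (hBp : Bpᵀ * Bp = 1)
    (hcomp2 : B * Bᵀ + Bp * Bpᵀ = 1)
    (D1 : Fin k → ℝ) (D2 : Fin (d - k) → ℝ)
    (hZm : Zm = Bhat * Matrix.diagonal D1 * Bhatᵀ + Bhatp * Matrix.diagonal D2 * Bhatpᵀ)
    (htop : ∀ i j, D2 j ≤ D1 i)
    (E1 : Fin k → ℝ) (E2 : Fin (d - k) → ℝ)
    (hZb : Zb = B * Matrix.diagonal E1 * Bᵀ + Bp * Matrix.diagonal E2 * Bpᵀ)
    (g : ℝ) (hg : 0 < g) (hgap : ∀ i j, E2 j + g ≤ E1 i)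
    (hpert : specNorm (Zm - Zb) ≤ g / 2) :
    specNorm (Bhatpᵀ * B) ≤ specNorm (Zm - Zb) / (g - specNorm (Zm - Zb)) ∧
    specNorm (Bhatpᵀ * B) ≤ (2 / g) * specNorm (Zm - Zb) := by
  have hε0 : 0 ≤ specNorm (Zm - Zb) := specNorm_nonneg _
  set ε := specNorm (Zm - Zb) with hεdef
  have hδ0 : 0 < g - ε := by linarith
  have h1 : specNorm (Bhatpᵀ * B) ≤ ε / (g - ε) := by
    rcases Nat.eq_zero_or_pos k with hk0 | hk
    · have hzero : specNorm (Bhatpᵀ * B) ≤ 0 := by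
        apply specNorm_le _ le_rfl
        intro x hx
        exfalso
        subst hk0
        simp at hx
      have := specNorm_nonneg (Bhatpᵀ * B)
      have hε' : 0 ≤ ε / (g - ε) := div_nonneg hε0 hδ0.le
      linarith
    rcases Nat.eq_zero_or_pos (d - k) with hdk0 | hdk
    · have hzero : specNorm (Bhatpᵀ * B) ≤ 0 := by
        apply specNorm_le _ le_rfl
        intro x hx
        haveI : IsEmpty (Fin (d - k)) := by rw [hdk0]; infer_instance
        rw [Finset.univ_eq_empty, Finset.sum_empty, Real.sqrt_zero]
      have := specNorm_nonneg (Bhatpᵀ * B)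
      have hε' : 0 ≤ ε / (g - ε) := div_nonneg hε0 hδ0.le
      linarith
    -- main case
    set S : Matrix (Fin (d - k)) (Fin k) ℝ := Bhatpᵀ * B with hS
    rcases eq_or_lt_of_le (specNorm_nonneg S) with hσ0 | hσpos
    · rw [← hσ0]
      exact div_nonneg hε0 hδ0.le
    obtain ⟨x, u, hx1, hu1, hSx, hSTu⟩ := exists_singular S hk hσpos
    set σ := specNorm S with hσdef
    haveI : Nonempty (Fin (d - k)) := Fin.pos_iff_nonempty.mp hdk
    obtain ⟨j0, hj0⟩ := Finite.exists_max E2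
    set M2 := E2 j0 with hM2def
    have hweyl : ∀ j, D2 j ≤ M2 + ε :=
      fun j => weyl_bound Zm Zb Bhat B Bhatp Bp hBhat hBhatp hcomp1 hcomp2 D1 D2 hZm htop
        E1 E2 hZb j M2 hj0
    have hE1 : ∀ i, M2 + g ≤ E1 i := fun i => hgap i j0
    have horthB : Bpᵀ * B = 0 := orth_comp B Bp hB hBp hcomp2
    have horth1 : Bhatpᵀ * Bhat = 0 := orth_comp Bhat Bhatp hBhat hBhatp hcomp1
    -- the key matrix identity
    have t1 : Bhatpᵀ * (B * Matrix.diagonal E1 * Bᵀ) * B = S * Matrix.diagonal E1 := by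
      calc Bhatpᵀ * (B * Matrix.diagonal E1 * Bᵀ) * B
          = (Bhatpᵀ * B) * Matrix.diagonal E1 * (Bᵀ * B) := by
            simp only [Matrix.mul_assoc]
        _ = S * Matrix.diagonal E1 := by rw [hB, Matrix.mul_one, hS]
    have t2 : Bhatpᵀ * (Bp * Matrix.diagonal E2 * Bpᵀ) * B = 0 := by
      calc Bhatpᵀ * (Bp * Matrix.diagonal E2 * Bpᵀ) * B
          = Bhatpᵀ * Bp * Matrix.diagonal E2 * (Bpᵀ * B) := by
            simp only [Matrix.mul_assoc]
        _ = 0 := by rw [horthB, Matrix.mul_zero]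
    have t3 : Bhatpᵀ * (Bhat * Matrix.diagonal D1 * Bhatᵀ) * B = 0 := by
      calc Bhatpᵀ * (Bhat * Matrix.diagonal D1 * Bhatᵀ) * B
          = (Bhatpᵀ * Bhat) * (Matrix.diagonal D1 * (Bhatᵀ * B)) := by
            simp only [Matrix.mul_assoc]
        _ = 0 := by rw [horth1, Matrix.zero_mul]
    have t4 : Bhatpᵀ * (Bhatp * Matrix.diagonal D2 * Bhatpᵀ) * B = Matrix.diagonal D2 * S := by
      calc Bhatpᵀ * (Bhatp * Matrix.diagonal D2 * Bhatpᵀ) * B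
          = (Bhatpᵀ * Bhatp) * (Matrix.diagonal D2 * (Bhatpᵀ * B)) := by
            simp only [Matrix.mul_assoc]
        _ = Matrix.diagonal D2 * S := by rw [hBhatp, Matrix.one_mul, hS]
    have hGm : Bhatpᵀ * Zb * B - Bhatpᵀ * Zm * B
        = S * Matrix.diagonal E1 - Matrix.diagonal D2 * S := by
      rw [hZb, hZm, Matrix.mul_add, Matrix.add_mul, Matrix.mul_add, Matrix.add_mul,
        t1, t2, t3, t4, add_zero, zero_add]
    set y : Fin d → ℝ := B.mulVec x with hy
    set r : Fin d → ℝ := (Zb - Zm).mulVec y with hr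
    have hy1 : ∑ i, y i ^ 2 = 1 := by
      rw [hy, sum_sq_mulVec_orth B hB x, hx1]
    have hrbound : ∑ i, r i ^ 2 ≤ ε ^ 2 := by
      have hrneg : r = -((Zm - Zb).mulVec y) := by
        rw [hr, ← Matrix.neg_mulVec, neg_sub]
      have h1 : ∑ i, r i ^ 2 = ∑ i, ((Zm - Zb).mulVec y i) ^ 2 := by
        rw [hrneg]
        apply Finset.sum_congr rfl
        intro i _
        simp [neg_sq]
      rw [h1]
      calc ∑ i, ((Zm - Zb).mulVec y i) ^ 2 ≤ specNorm (Zm - Zb) ^ 2 * ∑ i, y i ^ 2 :=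
            sq_mulVec_le _ y
        _ = ε ^ 2 := by rw [hy1, mul_one]
    have hcontr : ∑ i, (Bhatpᵀ.mulVec r i) ^ 2 ≤ ε ^ 2 := by
      have h := sum_sq_decomp Bhat Bhatp hcomp1 r
      have h2 : 0 ≤ ∑ i, (Bhatᵀ.mulVec r i) ^ 2 :=
        Finset.sum_nonneg fun i _ => sq_nonneg _
      linarith
    have hA : u ⬝ᵥ (Bhatpᵀ.mulVec r) ≤ ε := by
      calc u ⬝ᵥ (Bhatpᵀ.mulVec r)
          ≤ Real.sqrt (∑ i, u i ^ 2) * Real.sqrt (∑ i, (Bhatpᵀ.mulVec r i) ^ 2) :=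
            dot_cs _ u _
        _ ≤ 1 * ε := by
            apply mul_le_mul
            · rw [hu1, Real.sqrt_one]
            · calc Real.sqrt (∑ i, (Bhatpᵀ.mulVec r i) ^ 2)
                  ≤ Real.sqrt (ε ^ 2) := Real.sqrt_le_sqrt hcontr
                _ = ε := Real.sqrt_sq hε0
            · exact Real.sqrt_nonneg _
            · norm_num
        _ = ε := one_mul ε
    -- identity for Bhatpᵀ r
    have h5 : (Bhatpᵀ * Zb * B).mulVec x - (Bhatpᵀ * Zm * B).mulVec x = Bhatpᵀ.mulVec r := by
      rw [← Matrix.mulVec_mulVec (M := Bhatpᵀ * Zb), ← Matrix.mulVec_mulVec (M := Bhatpᵀ)]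
      rw [← Matrix.mulVec_mulVec (M := Bhatpᵀ * Zm), ← Matrix.mulVec_mulVec (M := Bhatpᵀ) (N := Zm)]
      rw [← Matrix.mulVec_sub, ← Matrix.sub_mulVec, ← hy, ← hr]
    have h6 := congrArg (fun M => M.mulVec x) hGm
    simp only [Matrix.sub_mulVec] at h6
    have hident : Bhatpᵀ.mulVec r
        = (S * Matrix.diagonal E1).mulVec x - (Matrix.diagonal D2 * S).mulVec x := by
      rw [← h5]
      exact h6
    have hB' : σ * (g - ε) ≤ u ⬝ᵥ (Bhatpᵀ.mulVec r) := by
      rw [hident, dotProduct_sub]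
      have hfirst : σ * (M2 + g) ≤ u ⬝ᵥ (S * Matrix.diagonal E1).mulVec x := by
        rw [← Matrix.mulVec_mulVec, dot_mulVec_eq, hSTu, smul_dotProduct, smul_eq_mul]
        apply mul_le_mul_of_nonneg_left _ hσpos.le
        calc M2 + g = ∑ i, (M2 + g) * x i ^ 2 := by
              rw [← Finset.mul_sum, hx1, mul_one]
          _ ≤ ∑ i, E1 i * x i ^ 2 := by
              apply Finset.sum_le_sum
              intro i _
              exact mul_le_mul_of_nonneg_right (hE1 i) (sq_nonneg _)
          _ = x ⬝ᵥ (Matrix.diagonal E1).mulVec x := by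
              simp only [dotProduct, Matrix.mulVec_diagonal]
              apply Finset.sum_congr rfl
              intro i _
              ring
      have hsecond : u ⬝ᵥ (Matrix.diagonal D2 * S).mulVec x ≤ σ * (M2 + ε) := by
        rw [← Matrix.mulVec_mulVec, hSx]
        calc u ⬝ᵥ (Matrix.diagonal D2).mulVec (σ • u)
            = σ * ∑ j, D2 j * u j ^ 2 := by
              simp only [dotProduct, Matrix.mulVec_diagonal, Pi.smul_apply, smul_eq_mul,
                Finset.mul_sum]
              apply Finset.sum_congr rfl
              intro i _
              ring
          _ ≤ σ * ∑ j, (M2 + ε) * u j ^ 2 := by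
              apply mul_le_mul_of_nonneg_left _ hσpos.le
              apply Finset.sum_le_sum
              intro i _
              exact mul_le_mul_of_nonneg_right (hweyl i) (sq_nonneg _)
          _ = σ * (M2 + ε) := by rw [← Finset.mul_sum, hu1, mul_one]
      have : σ * (g - ε) = σ * (M2 + g) - σ * (M2 + ε) := by ring
      linarith
    have hkey : σ * (g - ε) ≤ ε := le_trans hB' hA
    rw [le_div_iff₀ hδ0]
    exact hkey
  have h2 : ε / (g - ε) ≤ 2 / g * ε := by
    have hle : ε / (g - ε) ≤ ε / (g / 2) :=
      div_le_div_of_nonneg_left hε0 (by linarith) (by linarith)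
    calc ε / (g - ε) ≤ ε / (g / 2) := hle
      _ = 2 / g * ε := by
          field_simp
  exact ⟨h1, h1.trans h2⟩
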